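/- Let M be a symmetric n×n real matrix, a ∈ ℝ^n a nonzero vector, and γ > 0 such that ‖M − a aᵀ‖_spec ≤ ‖M‖_spec − γ‖a‖². Then any unit eigenvector u of M corresponding to an eigenvalue of maximal absolute value satisfies ⟨u, a/‖a‖⟩² ≥ γ. -/
import Mathlib


open scoped RealInnerProductSpace

/-- The spectral norm (operator 2-norm) of a real square matrix. -/
noncomputable def specNorm {n : ℕ} (M : Matrix (Fin n) (Fin n) ℝ) : ℝ :=
  ‖LinearMap.toContinuousLinearMap (Matrix.toEuclideanLin M)‖

/-- Eigenvectors of gapped matrices: if `M` is symmetric, `a ≠ 0`, `γ > 0` and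
`‖M − a aᵀ‖_spec ≤ ‖M‖_spec − γ‖a‖²`, then any unit eigenvector `u` of `M` whose
eigenvalue has maximal absolute value satisfies `⟨u, a/‖a‖⟩² ≥ γ`. -/
theorem eigenvector_of_gapped_matrix {n : ℕ} (M : Matrix (Fin n) (Fin n) ℝ)
    (hM : M.IsSymm) (a : EuclideanSpace ℝ (Fin n)) (ha : a ≠ 0) (γ : ℝ) (hγ : 0 < γ)
    (hgap : specNorm (M - Matrix.vecMulVec a a) ≤ specNorm M - γ * ‖a‖ ^ 2)
    (u : EuclideanSpace ℝ (Fin n)) (hu : ‖u‖ = 1) (μ : ℝ)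
    (heig : M.mulVec u = μ • (u : Fin n → ℝ)) (htop : |μ| = specNorm M) :
    γ ≤ ⟪u, (‖a‖⁻¹ • a : EuclideanSpace ℝ (Fin n))⟫ ^ 2 := by
  set c : ℝ := ⟪u, a⟫ with hc
  set T := LinearMap.toContinuousLinearMap
    (Matrix.toEuclideanLin (M - Matrix.vecMulVec a a)) with hT
  have h1 : (Matrix.vecMulVec a a).mulVec u = fun i => c * a i := by
    funext i
    simp only [Matrix.mulVec, Matrix.vecMulVec, dotProduct, Matrix.of_apply, hc,
      PiLp.inner_apply, RCLike.inner_apply, conj_trivial, Finset.mul_sum]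
    rw [Finset.sum_mul]
    refine Finset.sum_congr rfl fun j _ => ?_
    ring
  have hTu : (T u : EuclideanSpace ℝ (Fin n)) = μ • u - c • a := by
    ext i
    show (M - Matrix.vecMulVec a a).mulVec u i
        = (μ • u - c • a : EuclideanSpace ℝ (Fin n)) i
    rw [Matrix.sub_mulVec]
    simp [heig, h1]
  have hinner : ⟪u, (T u : EuclideanSpace ℝ (Fin n))⟫ = μ - c ^ 2 := by
    rw [hTu, inner_sub_right, real_inner_smul_right, real_inner_smul_right,
      real_inner_self_eq_norm_sq, hu, ← hc]
    ring
  have habs : |μ - c ^ 2| ≤ specNorm M - γ * ‖a‖ ^ 2 := by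
    calc |μ - c ^ 2| = |⟪u, (T u : EuclideanSpace ℝ (Fin n))⟫| := by rw [hinner]
    _ ≤ ‖u‖ * ‖(T u : EuclideanSpace ℝ (Fin n))‖ := abs_real_inner_le_norm _ _
    _ ≤ ‖u‖ * (‖T‖ * ‖u‖) :=
        mul_le_mul_of_nonneg_left (T.le_opNorm u) (norm_nonneg _)
    _ = ‖T‖ := by rw [hu]; ring
    _ = specNorm (M - Matrix.vecMulVec a a) := rfl
    _ ≤ specNorm M - γ * ‖a‖ ^ 2 := hgap
  have hna : (0:ℝ) < ‖a‖ := norm_pos_iff.mpr ha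
  have hna2 : (0:ℝ) < ‖a‖ ^ 2 := pow_pos hna 2
  have hcsq : γ * ‖a‖ ^ 2 ≤ c ^ 2 := by
    rw [← htop] at habs
    rcases abs_cases μ with ⟨h1', h2'⟩ | ⟨h1', h2'⟩
    · linarith [(abs_le.mp habs).2]
    · nlinarith [(abs_le.mp habs).1, sq_nonneg c]
  have hsc : ⟪u, (‖a‖⁻¹ • a : EuclideanSpace ℝ (Fin n))⟫ = ‖a‖⁻¹ * c := by
    rw [real_inner_smul_right, ← hc]
  rw [hsc, mul_pow]
  calc γ = γ * ‖a‖ ^ 2 * (‖a‖⁻¹) ^ 2 := by field_simp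
    _ ≤ c ^ 2 * (‖a‖⁻¹) ^ 2 := mul_le_mul_of_nonneg_right hcsq (sq_nonneg _)
    _ = (‖a‖⁻¹) ^ 2 * c ^ 2 := by ring
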